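/- (Sufficient condition of infeasibility.) Let y⁰ : Fin m → ℝ. If there exists c : Fin m → ℝ such that the bordered matrix H(c) := Matrix.fromBlocks (c·A) (Matrix.col (c·b)) (Matrix.row (c·b)) (Matrix.of (fun _ _ => -(c ⬝ᵥ y⁰))) : Matrix (Fin (n+1)) (Fin (n+1)) ℝ is positive definite, then y⁰ ∉ convexHull ℝ (Set.range f); in particular y⁰ ∉ Set.range f. -/

import Mathlib

open Matrix

theorem infeasibility_certificate (n m : ℕ)
    (A : Fin m → Matrix (Fin n) (Fin n) ℝ) (hA : ∀ k, (A k)ᵀ = A k)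
    (b : Fin m → (Fin n → ℝ))
    (f : (Fin n → ℝ) → (Fin m → ℝ))
    (hf : ∀ x k, f x k = x ⬝ᵥ (A k).mulVec x + 2 * (b k ⬝ᵥ x))
    (y₀ : Fin m → ℝ)
    (h : ∃ c : Fin m → ℝ,
      (Matrix.reindex finSumFinEquiv finSumFinEquiv
        (Matrix.fromBlocks (∑ k, c k • A k)
          (Matrix.replicateCol (Fin 1) (∑ k, c k • b k))
          (Matrix.replicateRow (Fin 1) (∑ k, c k • b k))
          (Matrix.of fun _ _ => -(c ⬝ᵥ y₀))) :
        Matrix (Fin (n + 1)) (Fin (n + 1)) ℝ).PosDef) :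
    y₀ ∉ convexHull ℝ (Set.range f) ∧ y₀ ∉ Set.range f := by
  obtain ⟨c, hc⟩ := h
  have key : ∀ x, c ⬝ᵥ y₀ < c ⬝ᵥ f x := by
    intro x
    set w : Fin n ⊕ Fin 1 → ℝ := Sum.elim x (fun _ => 1) with hw
    have hv : (w ∘ finSumFinEquiv.symm) ≠ 0 := by
      intro h0
      have := congrFun h0 (finSumFinEquiv (Sum.inr 0))
      simp [hw] at this
    have hpos := hc.dotProduct_mulVec_pos hv
    rw [reindex_apply, submatrix_mulVec_equiv] at hpos
    simp only [Equiv.symm_symm, star_trivial] at hpos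
    have hcomp : (w ∘ finSumFinEquiv.symm) ∘ finSumFinEquiv = w := by
      ext i; simp
    rw [hcomp, comp_equiv_dotProduct_comp_equiv] at hpos
    have hq : w ⬝ᵥ ((Matrix.fromBlocks (∑ k, c k • A k)
          (Matrix.replicateCol (Fin 1) (∑ k, c k • b k))
          (Matrix.replicateRow (Fin 1) (∑ k, c k • b k))
          (Matrix.of fun _ _ => -(c ⬝ᵥ y₀))) *ᵥ w)
        = x ⬝ᵥ ((∑ k, c k • A k) *ᵥ x) + 2 * ((∑ k, c k • b k) ⬝ᵥ x) - c ⬝ᵥ y₀ := by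
      rw [hw]
      rw [fromBlocks_mulVec, sumElim_dotProduct_sumElim]
      simp [Matrix.mulVec, dotProduct, Fin.sum_univ_one, mul_comm]
      simp only [mul_add, Finset.sum_add_distrib]
      ring
    rw [hq] at hpos
    have e1 : x ⬝ᵥ ((∑ k, c k • A k) *ᵥ x) = ∑ k, c k * (x ⬝ᵥ (A k *ᵥ x)) := by
      simp only [dotProduct, Matrix.mulVec, Matrix.sum_apply, Matrix.smul_apply, smul_eq_mul,
        Finset.mul_sum, Finset.sum_mul]
      conv_lhs => enter [2, i]; rw [Finset.sum_comm]
      rw [Finset.sum_comm]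
      refine Finset.sum_congr rfl fun k _ => Finset.sum_congr rfl fun i _ =>
        Finset.sum_congr rfl fun j _ => by ring
    have e2 : (∑ k, c k • b k) ⬝ᵥ x = ∑ k, c k * (b k ⬝ᵥ x) := by
      simp only [dotProduct, Finset.sum_apply, Pi.smul_apply, smul_eq_mul, Finset.mul_sum,
        Finset.sum_mul]
      rw [Finset.sum_comm (s := (Finset.univ : Finset (Fin n))) (t := (Finset.univ : Finset (Fin m)))]
      refine Finset.sum_congr rfl fun k _ => ?_
      refine Finset.sum_congr rfl fun i _ => ?_
      ring
    have hf' : c ⬝ᵥ f x = x ⬝ᵥ ((∑ k, c k • A k) *ᵥ x) + 2 * ((∑ k, c k • b k) ⬝ᵥ x) := by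
      rw [e1, e2, Finset.mul_sum, ← Finset.sum_add_distrib]
      simp only [dotProduct]
      refine Finset.sum_congr rfl fun k _ => ?_
      rw [hf]
      simp [dotProduct]
      ring
    rw [hf']
    linarith
  have hconv : Convex ℝ {y : Fin m → ℝ | c ⬝ᵥ y₀ < c ⬝ᵥ y} :=
    convex_halfSpace_gt ⟨fun a b => by simp [dotProduct_add], fun r a => by
      simp [dotProduct_smul]⟩ _
  have h1 : y₀ ∉ convexHull ℝ (Set.range f) := by
    intro hmem
    have hsub : Set.range f ⊆ {y : Fin m → ℝ | c ⬝ᵥ y₀ < c ⬝ᵥ y} := by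
      rintro y ⟨x, rfl⟩; exact key x
    have h2 : y₀ ∈ {y : Fin m → ℝ | c ⬝ᵥ y₀ < c ⬝ᵥ y} := convexHull_min hsub hconv hmem
    simp only [Set.mem_setOf_eq] at h2
    exact lt_irrefl _ h2
  exact ⟨h1, fun hy => h1 (subset_convexHull ℝ _ hy)⟩
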